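/- Let H be a hyperplane in V = F_q^n and G = GL_n(F_q)_H its pointwise stabilizer. Then the number of G-orbits on (F_{q^m})^n (with the action induced by the embedding F_q ⊂ F_{q^m}) equals q^{m(n-1)} + q^{(m-1)(n-1)}·(q^m − 1)/(q − 1). -/

import Mathlib

open Matrix

section MatrixAux

variable {n : ℕ} {R : Type} [CommRing R]

private lemma aux_mulVec (w c v : Fin n → R) :
    (1 + vecMulVec w c) *ᵥ v = v + (c ⬝ᵥ v) • w := by
  ext i
  simp only [add_mulVec, one_mulVec, Pi.add_apply, Pi.smul_apply, smul_eq_mul]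
  congr 1
  simp only [mulVec, dotProduct, vecMulVec_apply, Finset.sum_mul]
  exact Finset.sum_congr rfl fun j _ => by ring

private lemma aux_det (w c : Fin n → R) : (1 + vecMulVec w c).det = 1 + c ⬝ᵥ w := by
  rw [vecMulVec_eq (Fin 1), det_one_add_replicateCol_mul_replicateRow]

private lemma aux_map {E : Type} [CommRing E] (f : R →+* E) (w c : Fin n → R) :
    (1 + vecMulVec w c).map f = 1 + vecMulVec (f ∘ w) (f ∘ c) := by
  ext i j
  simp [Matrix.map_apply, Matrix.one_apply, vecMulVec_apply, apply_ite f]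

private lemma aux_dotmap {E : Type} [CommRing E] (f : R →+* E) (c w : Fin n → R) :
    (f ∘ c) ⬝ᵥ (f ∘ w) = f (c ⬝ᵥ w) := by
  simp [dotProduct, map_sum, _root_.map_mul]

end MatrixAux

section CardAux

variable {K : Type} [Field K] [Fintype K] {n : ℕ}

private noncomputable def dotL (c : Fin n → K) : (Fin n → K) →ₗ[K] K where
  toFun v := c ⬝ᵥ v
  map_add' x y := dotProduct_add c x y
  map_smul' a v := by simp [dotProduct_smul]

private lemma kercard (c : Fin n → K) (j0 : Fin n) (hc : c j0 ≠ 0) :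
    Nat.card {v : Fin n → K // c ⬝ᵥ v = 0} = Fintype.card K ^ (n - 1) := by
  classical
  have hsurj : Function.Surjective (dotL c) := by
    intro t
    refine ⟨(t * (c j0)⁻¹) • (Pi.single j0 1 : Fin n → K), ?_⟩
    simp only [dotL, LinearMap.coe_mk, AddHom.coe_mk, dotProduct_smul, dotProduct_single,
      smul_eq_mul, mul_one]
    field_simp
  have hrange : LinearMap.range (dotL c) = ⊤ := LinearMap.range_eq_top.mpr hsurj
  have hker : Module.finrank K (LinearMap.ker (dotL c)) = n - 1 := by
    have h := LinearMap.finrank_range_add_finrank_ker (dotL c)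
    rw [hrange, finrank_top, Module.finrank_self, Module.finrank_pi, Fintype.card_fin] at h
    omega
  have he : Nat.card {v : Fin n → K // c ⬝ᵥ v = 0} = Nat.card (LinearMap.ker (dotL c)) :=
    Nat.card_congr (Equiv.subtypeEquivRight fun v => (LinearMap.mem_ker (f := dotL c)).symm)
  letI : Fintype (LinearMap.ker (dotL c)) := Fintype.ofFinite _
  rw [he, Nat.card_eq_fintype_card, Module.card_eq_pow_finrank (K := K), hker]

private lemma affcard (c : Fin n → K) (j0 : Fin n) (hc : c j0 ≠ 0) :
    Nat.card {w : Fin n → K // 1 + c ⬝ᵥ w ≠ 0}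
      = Fintype.card K ^ n - Fintype.card K ^ (n - 1) := by
  classical
  have key : Nat.card {w : Fin n → K // 1 + c ⬝ᵥ w = 0} = Fintype.card K ^ (n - 1) := by
    rw [← kercard c j0 hc]
    refine Nat.card_congr (Equiv.subtypeEquiv
      (Equiv.subRight (-(c j0)⁻¹ • (Pi.single j0 1 : Fin n → K))) fun w => ?_)
    have : c ⬝ᵥ (-(c j0)⁻¹ • (Pi.single j0 1 : Fin n → K)) = -1 := by
      simp only [dotProduct_smul, dotProduct_single, smul_eq_mul, mul_one]
      field_simp
    rw [Equiv.subRight_apply, dotProduct_sub, this]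
    constructor <;> intro h <;> linear_combination h
  have h2 : Nat.card {w : Fin n → K // ¬ (1 + c ⬝ᵥ w = 0)}
      = Fintype.card K ^ n - Nat.card {w : Fin n → K // 1 + c ⬝ᵥ w = 0} := by
    rw [Nat.card_eq_fintype_card, Nat.card_eq_fintype_card, Fintype.card_subtype_compl,
      Fintype.card_fun, Fintype.card_fin]
  rw [h2, key]

end CardAux

private lemma exists_c {F : Type} [Field F] {n : ℕ} (hn : 1 ≤ n) (H : Submodule F (Fin n → F))
    (hH : Module.finrank F H = n - 1) :
    ∃ c : Fin n → F, (∃ j0, c j0 ≠ 0) ∧ ∀ v, (v ∈ H ↔ c ⬝ᵥ v = 0) := by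
  classical
  have hq : Module.finrank F ((Fin n → F) ⧸ H) = 1 := by
    have h := Submodule.finrank_quotient_add_finrank H
    rw [Module.finrank_pi, Fintype.card_fin, hH] at h
    omega
  obtain ⟨e⟩ : Nonempty (((Fin n → F) ⧸ H) ≃ₗ[F] F) :=
    FiniteDimensional.nonempty_linearEquiv_of_finrank_eq
      (by rw [hq, Module.finrank_self])
  set f : (Fin n → F) →ₗ[F] F := e.toLinearMap ∘ₗ H.mkQ with hf
  have hkf : ∀ v, v ∈ H ↔ f v = 0 := by
    intro v
    rw [hf, LinearMap.comp_apply]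
    constructor
    · intro hv
      rw [show H.mkQ v = 0 by rwa [← LinearMap.mem_ker, Submodule.ker_mkQ], map_zero]
    · intro hv
      have : H.mkQ v = 0 := by
        apply e.injective
        simpa using hv
      rwa [← Submodule.ker_mkQ H, LinearMap.mem_ker]
  refine ⟨fun j => f (Pi.single j 1), ?_, ?_⟩
  · by_contra hc
    push_neg at hc
    have hall : ∀ v, f v = 0 := by
      intro v
      have hv : v = ∑ j, Pi.single j (v j) := (Finset.univ_sum_single v).symm
      rw [hv, map_sum]
      refine Finset.sum_eq_zero fun j _ => ?_
      have : Pi.single j (v j) = (v j) • (Pi.single j 1 : Fin n → F) := by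
        rw [← Pi.single_smul, smul_eq_mul, mul_one]
      rw [this, _root_.map_smul, hc j, smul_zero]
    have : H = ⊤ := by
      rw [Submodule.eq_top_iff']
      intro v; exact (hkf v).mpr (hall v)
    rw [this] at hH
    rw [finrank_top, Module.finrank_pi, Fintype.card_fin] at hH
    omega
  · intro v
    rw [hkf v]
    have hv : f v = (fun j => f (Pi.single j 1)) ⬝ᵥ v := by
      conv_lhs => rw [show v = ∑ j, Pi.single j (v j) from (Finset.univ_sum_single v).symm]
      rw [map_sum, dotProduct]
      refine Finset.sum_congr rfl fun j _ => ?_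
      have : Pi.single j (v j) = (v j) • (Pi.single j 1 : Fin n → F) := by
        rw [← Pi.single_smul, smul_eq_mul, mul_one]
      rw [this, _root_.map_smul, smul_eq_mul, mul_comm]
    rw [hv]

private lemma char_rel {n : ℕ} {F E : Type} [Field F] [Field E] [Algebra F E]
    (c : Fin n → F) (j0 : Fin n) (hcj : c j0 ≠ 0)
    (H : Submodule F (Fin n → F)) (hker : ∀ v, v ∈ H ↔ c ⬝ᵥ v = 0) (x y : Fin n → E) :
    (∃ g : GL (Fin n) F,
        (∀ v ∈ H, Matrix.mulVec (g : Matrix (Fin n) (Fin n) F) v = v) ∧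
        Matrix.mulVec (((g : Matrix (Fin n) (Fin n) F)).map (algebraMap F E)) x = y)
    ↔ ∃ w : Fin n → F, 1 + c ⬝ᵥ w ≠ 0 ∧
        y = x + (((algebraMap F E) ∘ c) ⬝ᵥ x) • ((algebraMap F E) ∘ w) := by
  constructor
  · rintro ⟨g, h1, h2⟩
    set M : Matrix (Fin n) (Fin n) F := (g : Matrix (Fin n) (Fin n) F) with hMdef
    set w : Fin n → F := fun i => (M i j0 - (1 : Matrix (Fin n) (Fin n) F) i j0) * (c j0)⁻¹
      with hwdef
    have hM : M = 1 + vecMulVec w c := by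
      ext i j
      have hv : (c j0 • (Pi.single j 1 : Fin n → F) - c j • (Pi.single j0 1 : Fin n → F)) ∈ H := by
        rw [hker]
        simp only [dotProduct_sub, dotProduct_smul, dotProduct_single, smul_eq_mul, mul_one]
        ring
      have hkey := congrFun (h1 _ hv) i
      rw [mulVec_sub, mulVec_smul, mulVec_smul, mulVec_single, mulVec_single] at hkey
      simp only [Pi.sub_apply, Pi.smul_apply, smul_eq_mul, mul_one, MulOpposite.op_one, one_smul,
        Matrix.col_apply] at hkey
      have hs1 : (Pi.single j 1 : Fin n → F) i = (1 : Matrix (Fin n) (Fin n) F) i j := by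
        rw [Matrix.one_apply, Pi.single_apply]
      have hs2 : (Pi.single j0 1 : Fin n → F) i = (1 : Matrix (Fin n) (Fin n) F) i j0 := by
        rw [Matrix.one_apply, Pi.single_apply]
      rw [hs1, hs2] at hkey
      simp only [Matrix.add_apply, vecMulVec_apply, hwdef]
      field_simp
      linear_combination hkey
    refine ⟨w, ?_, ?_⟩
    · have hu : IsUnit M.det := (Matrix.isUnit_iff_isUnit_det M).mp ⟨g, rfl⟩
      rw [hM, aux_det] at hu
      exact hu.ne_zero
    · rw [← h2, hM, aux_map, aux_mulVec]
  · rintro ⟨w, hw, hy⟩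
    have hu : IsUnit (1 + vecMulVec w c) := by
      rw [Matrix.isUnit_iff_isUnit_det, aux_det]
      exact isUnit_iff_ne_zero.mpr hw
    refine ⟨hu.unit, ?_, ?_⟩
    · intro v hv
      have : (hu.unit : Matrix (Fin n) (Fin n) F) = 1 + vecMulVec w c := hu.unit_spec
      rw [this, aux_mulVec, (hker v).mp hv, zero_smul, add_zero]
    · have : (hu.unit : Matrix (Fin n) (Fin n) F) = 1 + vecMulVec w c := hu.unit_spec
      rw [this, aux_map, aux_mulVec, hy]

private lemma rel_equiv {n : ℕ} {F E : Type} [Field F] [Field E] [Algebra F E]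
    (H : Submodule F (Fin n → F)) :
    Equivalence (fun x y : Fin n → E =>
      ∃ g : GL (Fin n) F,
        (∀ v ∈ H, Matrix.mulVec (g : Matrix (Fin n) (Fin n) F) v = v) ∧
        Matrix.mulVec (((g : Matrix (Fin n) (Fin n) F)).map (algebraMap F E)) x = y) := by
  constructor
  · intro x
    exact ⟨1, fun v _ => by simp [Units.val_one], by simp [Units.val_one,
      Matrix.map_one _ (map_zero _) (map_one _)]⟩
  · rintro x y ⟨g, h1, h2⟩
    refine ⟨g⁻¹, fun v hv => ?_, ?_⟩
    · conv_lhs => rw [← h1 v hv]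
      rw [mulVec_mulVec, ← Units.val_mul, inv_mul_cancel, Units.val_one, one_mulVec]
    · rw [← h2, mulVec_mulVec, ← Matrix.map_mul, ← Units.val_mul, inv_mul_cancel,
        Units.val_one, Matrix.map_one _ (map_zero _) (map_one _), one_mulVec]
  · rintro x y z ⟨g, h1, h2⟩ ⟨g', h1', h2'⟩
    refine ⟨g' * g, fun v hv => ?_, ?_⟩
    · rw [Units.val_mul, ← mulVec_mulVec, h1 v hv, h1' v hv]
    · rw [Units.val_mul, Matrix.map_mul, ← mulVec_mulVec, h2, h2']

private lemma count_quot {α : Type} [Fintype α] (r : α → α → Prop) (hr : Equivalence r)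
    (P : α → Prop) (hP : ∀ {x y}, r x y → (P x ↔ P y))
    (k : ℕ)
    (h1 : ∀ x, P x → ∀ y, r x y → y = x)
    (h2 : ∀ x, ¬ P x → Nat.card {y // r x y} = k) :
    Nat.card (Quot r) * k = Nat.card {x // P x} * k + Nat.card {x // ¬ P x} := by
  classical
  letI : Finite (Quot r) := Finite.of_surjective (Quot.mk r) Quot.mk_surjective
  letI : Fintype (Quot r) := Fintype.ofFinite _
  letI : ∀ t : Quot r, Fintype {x // Quot.mk r x = t} := fun _ => Fintype.ofFinite _
  set P' : Quot r → Prop := Quot.lift P (fun a b h => propext (hP h)) with hP'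
  have hmk : ∀ x y, Quot.mk r x = Quot.mk r y ↔ r x y := fun x y => by
    rw [Quot.eq]; exact hr.eqvGen_iff
  have hfib1 : ∀ t : Quot r, P' t → Nat.card {x // Quot.mk r x = t} = 1 := by
    intro t
    obtain ⟨x0, rfl⟩ := Quot.exists_rep t
    intro hp
    have hPx0 : P x0 := hp
    have e : {x // Quot.mk r x = Quot.mk r x0} ≃ {x // x = x0} :=
      Equiv.subtypeEquivRight (fun x => by
        rw [hmk]
        exact ⟨fun h => h1 x0 hPx0 x (hr.symm h), fun h => h ▸ hr.refl x⟩)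
    rw [Nat.card_congr e]
    letI : Unique {x // x = x0} := ⟨⟨⟨x0, rfl⟩⟩, fun a => Subtype.ext a.prop⟩
    exact Nat.card_unique
  have hfib2 : ∀ t : Quot r, ¬ P' t → Nat.card {x // Quot.mk r x = t} = k := by
    intro t
    obtain ⟨x0, rfl⟩ := Quot.exists_rep t
    intro hp
    have e : {x // Quot.mk r x = Quot.mk r x0} ≃ {x // r x0 x} :=
      Equiv.subtypeEquivRight (fun x => by
        rw [hmk]; exact ⟨fun h => hr.symm h, fun h => hr.symm h⟩)
    rw [Nat.card_congr e]
    exact h2 x0 hp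
  have key : Fintype.card α = ∑ t : Quot r, Nat.card {x // Quot.mk r x = t} := by
    calc Fintype.card α = Fintype.card (Σ t : Quot r, {x // Quot.mk r x = t}) :=
          (Fintype.card_congr (Equiv.sigmaFiberEquiv (Quot.mk r))).symm
      _ = ∑ t : Quot r, Fintype.card {x // Quot.mk r x = t} := Fintype.card_sigma
      _ = ∑ t : Quot r, Nat.card {x // Quot.mk r x = t} := by
          simp [Nat.card_eq_fintype_card]
  rw [← Finset.sum_filter_add_sum_filter_not Finset.univ P'] at key
  have s1 : ∑ t ∈ Finset.univ.filter P', Nat.card {x // Quot.mk r x = t}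
      = Nat.card {t : Quot r // P' t} := by
    rw [Finset.sum_congr rfl (fun t ht => hfib1 t (Finset.mem_filter.mp ht).2),
      Finset.sum_const, smul_eq_mul, mul_one, Nat.card_eq_fintype_card, Fintype.card_subtype]
  have s2 : ∑ t ∈ Finset.univ.filter (fun t => ¬ P' t), Nat.card {x // Quot.mk r x = t}
      = Nat.card {t : Quot r // ¬ P' t} * k := by
    rw [Finset.sum_congr rfl (fun t ht => hfib2 t (Finset.mem_filter.mp ht).2),
      Finset.sum_const, smul_eq_mul, Nat.card_eq_fintype_card, Fintype.card_subtype]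
  rw [s1, s2] at key
  have eA : Nat.card {x : α // P x} = Nat.card {t : Quot r // P' t} := by
    refine Nat.card_congr (Equiv.ofBijective (fun x => ⟨Quot.mk r x.1, x.2⟩) ⟨?_, ?_⟩)
    · rintro ⟨x, hx⟩ ⟨y, hy⟩ hxy
      have : r x y := (hmk x y).mp (congrArg Subtype.val hxy)
      exact Subtype.ext (h1 x hx y this).symm
    · rintro ⟨t, ht⟩
      obtain ⟨x0, rfl⟩ := Quot.exists_rep t
      exact ⟨⟨x0, ht⟩, rfl⟩
  have hsplitα : Fintype.card α = Nat.card {x : α // P x} + Nat.card {x : α // ¬ P x} := by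
    rw [← Nat.card_eq_fintype_card, ← Nat.card_sum]
    exact Nat.card_congr (Equiv.sumCompl P).symm
  have hsplitQ : Nat.card (Quot r) = Nat.card {t : Quot r // P' t}
      + Nat.card {t : Quot r // ¬ P' t} := by
    rw [← Nat.card_sum]
    exact Nat.card_congr (Equiv.sumCompl P').symm
  have hC : Nat.card {x : α // ¬ P x} = Nat.card {t : Quot r // ¬ P' t} * k := by omega
  rw [hsplitQ, hC, eA]
  ring

/-- For a hyperplane `H` in `F_q^n` and `G = GL_n(F_q)_H` its pointwise stabilizer, the
number of `G`-orbits on `(F_{q^m})^n` (action induced by the embedding `F_q ⊆ F_{q^m}`)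
is `q^{m(n−1)} + q^{(m−1)(n−1)}·(q^m − 1)/(q − 1)`. -/
theorem stmt_6 (q n m : ℕ) (F E : Type) [Field F] [Fintype F] [Field E] [Fintype E]
    [Algebra F E] (hq : Fintype.card F = q) (hE : Fintype.card E = q ^ m)
    (hm : 1 ≤ m) (hn : 1 ≤ n)
    (H : Submodule F (Fin n → F)) (hH : Module.finrank F H = n - 1) :
    Nat.card (Quot fun x y : Fin n → E =>
      ∃ g : GL (Fin n) F,
        (∀ v ∈ H, Matrix.mulVec (g : Matrix (Fin n) (Fin n) F) v = v) ∧
        Matrix.mulVec (((g : Matrix (Fin n) (Fin n) F)).map (algebraMap F E)) x = y)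
      = q ^ (m * (n - 1)) + q ^ ((m - 1) * (n - 1)) * ((q ^ m - 1) / (q - 1)) := by
  classical
  obtain ⟨c, ⟨j0, hcj⟩, hker⟩ := exists_c hn H hH
  set cE : Fin n → E := (algebraMap F E) ∘ c with hcE
  have hcEj : cE j0 ≠ 0 := fun h => hcj ((map_eq_zero (algebraMap F E)).mp h)
  set rr : (Fin n → E) → (Fin n → E) → Prop := fun x y =>
    ∃ w : Fin n → F, 1 + c ⬝ᵥ w ≠ 0 ∧
      y = x + (((algebraMap F E) ∘ c) ⬝ᵥ x) • ((algebraMap F E) ∘ w) with hrr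
  have hchar : ∀ x y : Fin n → E,
      (∃ g : GL (Fin n) F,
        (∀ v ∈ H, Matrix.mulVec (g : Matrix (Fin n) (Fin n) F) v = v) ∧
        Matrix.mulVec (((g : Matrix (Fin n) (Fin n) F)).map (algebraMap F E)) x = y) ↔ rr x y :=
    fun x y => char_rel c j0 hcj H hker x y
  have hcongr : Nat.card (Quot fun x y : Fin n → E =>
      ∃ g : GL (Fin n) F,
        (∀ v ∈ H, Matrix.mulVec (g : Matrix (Fin n) (Fin n) F) v = v) ∧
        Matrix.mulVec (((g : Matrix (Fin n) (Fin n) F)).map (algebraMap F E)) x = y)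
      = Nat.card (Quot rr) := Nat.card_congr (Quot.congrRight hchar)
  have hRequiv := rel_equiv (E := E) H
  have hrrEquiv : Equivalence rr :=
    ⟨fun x => (hchar x x).mp (hRequiv.refl x),
     fun {x y} h => (hchar y x).mp (hRequiv.symm ((hchar x y).mpr h)),
     fun {x y z} h h' => (hchar x z).mp (hRequiv.trans ((hchar x y).mpr h) ((hchar y z).mpr h'))⟩
  set P : (Fin n → E) → Prop := fun x => cE ⬝ᵥ x = 0 with hPdef
  have hdot : ∀ (x : Fin n → E) (w : Fin n → F),
      cE ⬝ᵥ (x + (cE ⬝ᵥ x) • ((algebraMap F E) ∘ w))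
        = (cE ⬝ᵥ x) * (algebraMap F E (1 + c ⬝ᵥ w)) := by
    intro x w
    rw [dotProduct_add, dotProduct_smul, hcE, aux_dotmap, smul_eq_mul, map_add, _root_.map_one,
      mul_add, mul_one]
  have hP : ∀ {x y : Fin n → E}, rr x y → (P x ↔ P y) := by
    rintro x y ⟨w, hw, rfl⟩
    have hne : algebraMap F E (1 + c ⬝ᵥ w) ≠ 0 := fun h => hw ((map_eq_zero _).mp h)
    simp only [hPdef]
    rw [← hcE, hdot]
    constructor
    · intro h; rw [h, zero_mul]
    · intro h
      rcases mul_eq_zero.mp h with h' | h'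
      · exact h'
      · exact absurd h' hne
  have h1 : ∀ x, P x → ∀ y, rr x y → y = x := by
    rintro x hx y ⟨w, hw, rfl⟩
    rw [← hcE, hx, zero_smul, add_zero]
  have h2 : ∀ x, ¬ P x → Nat.card {y // rr x y}
      = Fintype.card F ^ n - Fintype.card F ^ (n - 1) := by
    intro x hx
    rw [← affcard c j0 hcj]
    refine (Nat.card_congr (Equiv.ofBijective
      (fun w : {w : Fin n → F // 1 + c ⬝ᵥ w ≠ 0} =>
        (⟨x + (((algebraMap F E) ∘ c) ⬝ᵥ x) • ((algebraMap F E) ∘ w.1),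
          ⟨w.1, w.2, rfl⟩⟩ : {y // rr x y})) ⟨?_, ?_⟩)).symm
    · rintro ⟨w, hw⟩ ⟨w', hw'⟩ hww
      have h := congrArg Subtype.val hww
      simp only at h
      have hcc : (((algebraMap F E) ∘ c) ⬝ᵥ x) • ((algebraMap F E) ∘ w)
          = (((algebraMap F E) ∘ c) ⬝ᵥ x) • ((algebraMap F E) ∘ w') := add_left_cancel h
      have hs : ((algebraMap F E) ∘ c) ⬝ᵥ x ≠ 0 := hx
      have h3 : (algebraMap F E) ∘ w = (algebraMap F E) ∘ w' :=
        smul_right_injective (Fin n → E) hs hcc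
      refine Subtype.ext (funext fun i => ?_)
      exact (algebraMap F E).injective (congrFun h3 i)
    · rintro ⟨y, w, hw, hy⟩
      exact ⟨⟨w, hw⟩, Subtype.ext hy.symm⟩
  have hcount := count_quot rr hrrEquiv P hP
    (Fintype.card F ^ n - Fintype.card F ^ (n - 1)) h1 h2
  have hAval : Nat.card {x : Fin n → E // P x} = Fintype.card E ^ (n - 1) :=
    kercard cE j0 hcEj
  have hAval' : Fintype.card {x : Fin n → E // P x} = Fintype.card E ^ (n - 1) := by
    rw [← Nat.card_eq_fintype_card]; exact hAval
  have hCval : Nat.card {x : Fin n → E // ¬ P x}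
      = Fintype.card E ^ n - Fintype.card E ^ (n - 1) := by
    rw [Nat.card_eq_fintype_card, Fintype.card_subtype_compl, Fintype.card_fun,
      Fintype.card_fin, hAval']
  rw [hAval, hCval, hq, hE] at hcount
  rw [hcongr]
  -- arithmetic
  have hq2 : 1 < q := hq ▸ Fintype.one_lt_card
  obtain ⟨m', rfl⟩ : ∃ m', m = m' + 1 := ⟨m - 1, by omega⟩
  obtain ⟨n', rfl⟩ : ∃ n', n = n' + 1 := ⟨n - 1, by omega⟩
  simp only [Nat.add_sub_cancel] at hcount ⊢
  simp only [← pow_mul] at hcount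
  have hk0 : 0 < q ^ (n' + 1) - q ^ n' :=
    Nat.sub_pos_of_lt (Nat.pow_lt_pow_right hq2 (Nat.lt_succ_self n'))
  have hdvd : (q - 1) ∣ (q ^ (m' + 1) - 1) := by
    simpa using Nat.sub_dvd_pow_sub_pow q 1 (m' + 1)
  have hk : q ^ (n' + 1) - q ^ n' = q ^ n' * (q - 1) := by
    rw [Nat.mul_sub, mul_one, ← pow_succ]
  have harith : (q ^ ((m' + 1) * n') + q ^ (m' * n') * ((q ^ (m' + 1) - 1) / (q - 1)))
      * (q ^ (n' + 1) - q ^ n')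
      = q ^ ((m' + 1) * n') * (q ^ (n' + 1) - q ^ n')
        + (q ^ ((m' + 1) * (n' + 1)) - q ^ ((m' + 1) * n')) := by
    rw [Nat.add_mul]
    congr 1
    calc q ^ (m' * n') * ((q ^ (m' + 1) - 1) / (q - 1)) * (q ^ (n' + 1) - q ^ n')
        = (q ^ (m' * n') * q ^ n') * ((q ^ (m' + 1) - 1) / (q - 1) * (q - 1)) := by
          rw [hk]; ring
      _ = q ^ ((m' + 1) * n') * (q ^ (m' + 1) - 1) := by
          rw [Nat.div_mul_cancel hdvd, ← pow_add,
            show m' * n' + n' = (m' + 1) * n' from by ring]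
      _ = q ^ ((m' + 1) * (n' + 1)) - q ^ ((m' + 1) * n') := by
          rw [Nat.mul_sub, mul_one, ← pow_add,
            show (m' + 1) * n' + (m' + 1) = (m' + 1) * (n' + 1) from by ring]
  refine Nat.eq_of_mul_eq_mul_right hk0 ?_
  rw [hcount, harith]
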